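/- arXiv:1405.1772 — 2 statements merged into one kernel-verified Lean document; each statement's English description precedes it below -/
import Mathlib

section
/- Let (K, v) be a separably closed valued field of characteristic p > 0 with value group Γ = v(K^×) (Γ is then divisible). Let a_0, …, a_d ∈ K with a_0 ≠ 0, and let n ∈ K with n ≠ 0. Then there exists m ∈ K, m ≠ 0, such that ∑_{i=0}^{d} a_i·m^{p^i} = n and v(n) = min_{i : a_i ≠ 0} (p^i·v(m) + v(a_i)). -/
open Polynomial Finset

/-- A valuation on a field `K` with values in the linearly ordered abelian group `Γ`
(together with `∞ = ⊤`), surjective onto `Γ`, i.e. `Γ = v(K^×)`. -/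
structure ValuedFieldAux (K : Type*) [Field K] (Γ : Type*)
    [AddCommGroup Γ] [LinearOrder Γ] [IsOrderedAddMonoid Γ] where
  v : K → WithTop Γ
  v_eq_top_iff : ∀ x : K, v x = ⊤ ↔ x = 0
  v_mul : ∀ x y : K, v (x * y) = v x + v y
  v_add : ∀ x y : K, min (v x) (v y) ≤ v (x + y)
  v_surj : ∀ γ : Γ, ∃ x : K, v x = (γ : WithTop Γ)


lemma coe_nsmul_wt {Γ : Type*} [AddCommGroup Γ] [LinearOrder Γ] [IsOrderedAddMonoid Γ] (k : ℕ) (g : Γ) :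
    (k • (g : WithTop Γ)) = ((k • g : Γ) : WithTop Γ) := by
  induction k with
  | zero => simp
  | succ k ih => rw [succ_nsmul, succ_nsmul, WithTop.coe_add, ih]


namespace ValuedFieldAux
variable {K : Type*} [Field K] {Γ : Type*} [AddCommGroup Γ] [LinearOrder Γ] [IsOrderedAddMonoid Γ]
  (vf : ValuedFieldAux K Γ)

include vf

lemma v_zero : vf.v 0 = ⊤ := (vf.v_eq_top_iff 0).2 rfl

lemma v_ne_top {x : K} (hx : x ≠ 0) : vf.v x ≠ ⊤ := fun h => hx ((vf.v_eq_top_iff x).1 h)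

lemma v_one : vf.v 1 = 0 := by
  have h := vf.v_mul 1 1
  rw [mul_one] at h
  have hne : vf.v 1 ≠ ⊤ := vf.v_ne_top one_ne_zero
  obtain ⟨g, hg⟩ := WithTop.ne_top_iff_exists.1 hne
  rw [← hg] at h
  rw [← hg]
  norm_cast at h ⊢
  exact left_eq_add.1 h

lemma v_neg (x : K) : vf.v (-x) = vf.v x := by
  have h1 : vf.v (-1 : K) = 0 := by
    have h := vf.v_mul (-1) (-1)
    rw [neg_mul_neg, one_mul, vf.v_one] at h
    have hne : vf.v (-1 : K) ≠ ⊤ := vf.v_ne_top (by norm_num)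
    obtain ⟨g, hg⟩ := WithTop.ne_top_iff_exists.1 hne
    rw [← hg] at h ⊢
    norm_cast at h ⊢
    rcases lt_trichotomy g 0 with hg0 | hg0 | hg0
    · exact absurd h (ne_of_lt (add_neg hg0 hg0))
    · exact hg0
    · exact absurd h (ne_of_gt (add_pos hg0 hg0))
  have := vf.v_mul (-1) x
  rw [neg_one_mul] at this
  rw [this, h1, zero_add]

lemma v_pow (x : K) (k : ℕ) : vf.v (x ^ k) = k • vf.v x := by
  induction k with
  | zero => simp [vf.v_one]
  | succ k ih => rw [pow_succ, vf.v_mul, ih, succ_nsmul]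

/-- ultrametric strictness -/
lemma v_add_eq_left {x y : K} (h : vf.v x < vf.v y) : vf.v (x + y) = vf.v x := by
  refine le_antisymm ?_ (le_trans (le_min le_rfl h.le) (vf.v_add x y))
  have h2 : vf.v x = vf.v ((x + y) + (-y)) := by rw [add_neg_cancel_right]
  have h3 := vf.v_add (x + y) (-y)
  rw [vf.v_neg, ← h2] at h3
  rcases le_total (vf.v (x + y)) (vf.v y) with hc | hc
  · rwa [min_eq_left hc] at h3
  · rw [min_eq_right hc] at h3
    exact absurd (lt_of_lt_of_le h h3) (lt_irrefl _)

lemma le_v_multiset_sum (s : Multiset K) (c : WithTop Γ) (h : ∀ x ∈ s, c ≤ vf.v x) :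
    c ≤ vf.v s.sum := by
  induction s using Multiset.induction with
  | empty => simp [vf.v_zero]
  | cons x s ih =>
    rw [Multiset.sum_cons]
    refine le_trans (le_min (h x (Multiset.mem_cons_self x s)) ?_) (vf.v_add _ _)
    exact ih (fun y hy => h y (Multiset.mem_cons_of_mem hy))

lemma le_v_finset_sum {ι : Type*} (t : Finset ι) (f : ι → K) (c : WithTop Γ)
    (h : ∀ i ∈ t, c ≤ vf.v (f i)) : c ≤ vf.v (∑ i ∈ t, f i) := by
  classical
  induction t using Finset.induction with
  | empty => simp [vf.v_zero]
  | insert _ _ hx ih =>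
    rw [Finset.sum_insert hx]
    refine le_trans (le_min (h _ (Finset.mem_insert_self _ _)) ?_) (vf.v_add _ _)
    exact ih (fun y hy => h y (Finset.mem_insert_of_mem hy))

lemma v_multiset_prod (s : Multiset K) : vf.v s.prod = (s.map vf.v).sum := by
  induction s using Multiset.induction with
  | empty => simp [vf.v_one]
  | cons x s ih => rw [Multiset.prod_cons, vf.v_mul, ih, Multiset.map_cons, Multiset.sum_cons]

lemma p_div_neg (p : ℕ) (hp : p.Prime) [CharP K p] [IsSepClosed K]
    (δ : Γ) (hδ : δ < 0) : ∃ g : Γ, p • g = δ := by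
  obtain ⟨x, hx⟩ := vf.v_surj δ
  have hx0 : x ≠ 0 := by
    intro h; rw [h, vf.v_zero] at hx; exact (WithTop.top_ne_coe) hx
  set Q : K[X] := X ^ p - (X + C x) with hQ
  have hdeg : Q.natDegree = p := by
    have h1 : (X + C x : K[X]).natDegree < (X ^ p : K[X]).natDegree := by
      rw [natDegree_X_pow]
      calc (X + C x : K[X]).natDegree ≤ 1 := by compute_degree
      _ < p := hp.one_lt
    rw [hQ, natDegree_sub_eq_left_of_natDegree_lt h1, natDegree_X_pow]
  have hsep : Q.Separable := by
    unfold Polynomial.Separable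
    have : derivative Q = -1 := by
      simp [hQ, derivative_X_pow, CharP.cast_eq_zero K p]
    rw [this]
    exact (isCoprime_one_right).neg_right
  obtain ⟨y, hy⟩ := IsSepClosed.exists_root Q
    (degree_ne_of_natDegree_ne (by rw [hdeg]; exact hp.ne_zero) (n := 0)) hsep
  have hyx : y ^ p + (-y) = x := by
    have := hy
    simp only [hQ, IsRoot, eval_sub, eval_add, eval_pow, eval_X, eval_C] at this
    linear_combination this
  -- y ≠ 0
  have hy0 : y ≠ 0 := by
    intro h; rw [h] at hyx
    simp [zero_pow hp.ne_zero] at hyx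
    exact hx0 hyx.symm
  -- v y < 0
  have hvy : vf.v y < 0 := by
    by_contra hge
    push_neg at hge
    have h1 : (0 : WithTop Γ) ≤ vf.v (y ^ p) := by
      rw [vf.v_pow]; exact nsmul_nonneg hge p
    have h2 : (0 : WithTop Γ) ≤ vf.v x := by
      rw [← hyx]
      refine le_trans (le_min h1 ?_) (vf.v_add _ _)
      rw [vf.v_neg]; exact hge
    rw [hx] at h2
    exact absurd (lt_of_le_of_lt h2 (by exact_mod_cast hδ)) (lt_irrefl _)
  obtain ⟨g, hg⟩ := WithTop.ne_top_iff_exists.1 (vf.v_ne_top hy0)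
  have hgneg : g < 0 := by
    rw [← hg] at hvy; exact_mod_cast hvy
  have hlt : (p : ℕ) • g < g := by
    have h2 : (p - 1) • g < 0 := by
      have := nsmul_pos (neg_pos.2 hgneg) (Nat.sub_ne_zero_of_lt hp.one_lt)
      rw [smul_neg] at this
      exact neg_pos.1 this
    calc p • g = (p - 1) • g + g := by
          rw [← succ_nsmul]; congr 1; have := hp.two_le; omega
    _ < 0 + g := by exact add_lt_add_left h2 g
    _ = g := zero_add g
  have hvyp : vf.v (y ^ p) < vf.v (-y) := by
    rw [vf.v_pow, vf.v_neg, ← hg, coe_nsmul_wt]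
    exact_mod_cast hlt
  have : vf.v x = ((p • g : Γ) : WithTop Γ) := by
    rw [← hyx, vf.v_add_eq_left hvyp, vf.v_pow, ← hg, coe_nsmul_wt]
  rw [hx] at this
  exact ⟨g, (WithTop.coe_inj.1 this).symm⟩

lemma p_div (p : ℕ) (hp : p.Prime) [CharP K p] [IsSepClosed K]
    (δ : Γ) : ∃ g : Γ, p • g = δ := by
  rcases lt_trichotomy δ 0 with h | h | h
  · exact vf.p_div_neg p hp δ h
  · exact ⟨0, by simp [h]⟩
  · obtain ⟨g, hg⟩ := vf.p_div_neg p hp (-δ) (neg_lt_zero.2 h)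
    exact ⟨-g, by rw [smul_neg, hg, neg_neg]⟩

lemma p_pow_div (p : ℕ) (hp : p.Prime) [CharP K p] [IsSepClosed K]
    (k : ℕ) (δ : Γ) : ∃ g : Γ, p ^ k • g = δ := by
  induction k generalizing δ with
  | zero => exact ⟨δ, by simp⟩
  | succ k ih =>
    obtain ⟨g1, hg1⟩ := vf.p_div p hp δ
    obtain ⟨g, hg⟩ := ih g1
    exact ⟨g, by rw [pow_succ, mul_nsmul, hg, hg1]⟩

lemma core (p : ℕ) (hp : p.Prime) [CharP K p] [IsSepClosed K]
    (D : ℕ) (b : ℕ → K) (hb0 : b 0 ≠ 0) (hbD : b D ≠ 0) (n : K) (hn : n ≠ 0)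
    (i₀ : ℕ) (hi₀ : i₀ ≤ D) (hi₀v : vf.v (b i₀) = vf.v n) :
    ∃ z : K, z ≠ 0 ∧ 0 ≤ vf.v z ∧ ∑ i ∈ Finset.range (D+1), b i * z ^ (p ^ i) = n := by
  classical
  set P : K[X] := (∑ i ∈ range (D+1), C (b i) * X ^ (p ^ i)) - C n with hP
  have hppow_pos : ∀ j : ℕ, 0 < p ^ j := fun j => pow_pos hp.pos j
  have hpmono : ∀ i j : ℕ, i ≤ j → p ^ i ≤ p ^ j :=
    fun i j h => Nat.pow_le_pow_right hp.pos h
  -- coefficient facts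
  have hcoeff : ∀ j, j ≤ D → P.coeff (p ^ j) = b j := by
    intro j hj
    rw [hP, coeff_sub, finset_sum_coeff]
    have h2 : (C n).coeff (p ^ j) = 0 := by
      rw [coeff_C, if_neg (hppow_pos j).ne']
    rw [h2, sub_zero]
    rw [Finset.sum_eq_single j]
    · simp [coeff_C_mul, coeff_X_pow]
    · intro i hi hij
      rw [coeff_C_mul, coeff_X_pow, if_neg, mul_zero]
      exact fun h => hij (Nat.pow_right_injective hp.two_le h.symm)
    · intro h
      exact absurd (Finset.mem_range.2 (Nat.lt_succ_of_le hj)) h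
  have hc0 : P.coeff 0 = -n := by
    rw [hP, coeff_sub, finset_sum_coeff]
    rw [coeff_C, if_pos rfl]
    rw [Finset.sum_eq_zero, zero_sub]
    intro i _
    rw [coeff_C_mul, coeff_X_pow, if_neg (hppow_pos i).ne, mul_zero]
  -- degree
  have hdegle : P.natDegree ≤ p ^ D := by
    refine le_trans (natDegree_sub_le _ _) (max_le ?_ (by simp))
    refine natDegree_sum_le_of_forall_le _ _ ?_
    intro i hi
    refine le_trans (natDegree_C_mul_le _ _) ?_
    rw [natDegree_X_pow]
    exact hpmono i D (Nat.lt_succ_iff.1 (Finset.mem_range.1 hi))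
  have hdeg : P.natDegree = p ^ D :=
    natDegree_eq_of_le_of_coeff_ne_zero hdegle (by rw [hcoeff D le_rfl]; exact hbD)
  have hlead : P.leadingCoeff = b D := by
    rw [leadingCoeff, hdeg, hcoeff D le_rfl]
  have hPne : P ≠ 0 := fun h => hbD (by rw [← hlead, h, leadingCoeff_zero])
  -- separability
  have hder : derivative P = C (b 0) := by
    rw [hP, derivative_sub, derivative_C, sub_zero, derivative_sum]
    rw [Finset.sum_eq_single 0]
    · simp
    · intro i hi hi0
      rw [derivative_C_mul, derivative_X_pow]
      have : ((p ^ i : ℕ) : K) = 0 :=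
        (CharP.cast_eq_zero_iff K p (p ^ i)).2 (dvd_pow_self p hi0)
      rw [this]
      simp
    · intro h
      exact absurd (Finset.mem_range.2 (Nat.succ_pos D)) h
  have hsep : P.Separable := by
    unfold Polynomial.Separable
    rw [hder]
    obtain ⟨w, hw⟩ := (Polynomial.isUnit_C.2 (isUnit_iff_ne_zero.2 hb0)).exists_left_inv
    exact ⟨0, w, by rw [zero_mul, zero_add, hw]⟩
  have hsplit : P.Splits := IsSepClosed.splits_of_separable P hsep
  have hcard : P.roots.card = p ^ D := by
    rw [splits_iff_card_roots.1 hsplit, hdeg]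
  have hfact : P = C (b D) * (P.roots.map fun t => X - C t).prod := by
    rw [← hlead]; exact hsplit.eq_prod_roots
  -- roots are nonzero, and are solutions
  have hroot0 : ∀ z ∈ P.roots, z ≠ 0 := by
    intro z hz h0
    have := isRoot_of_mem_roots hz
    rw [h0, IsRoot, ← coeff_zero_eq_eval_zero, hc0] at this
    exact hn (neg_eq_zero.1 this)
  have heval : ∀ z ∈ P.roots, ∑ i ∈ Finset.range (D+1), b i * z ^ (p ^ i) = n := by
    intro z hz
    have := isRoot_of_mem_roots hz
    rw [IsRoot, hP, eval_sub, eval_finset_sum, eval_C, sub_eq_zero] at this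
    rw [← this]
    exact Finset.sum_congr rfl (fun i _ => by rw [eval_mul, eval_C, eval_pow, eval_X])
  -- pick root of maximal valuation
  have hne : P.roots.toFinset.Nonempty := by
    rw [Finset.nonempty_iff_ne_empty]
    intro h
    rw [Multiset.toFinset_eq_empty.1 h] at hcard
    simp at hcard
    exact (hppow_pos D).ne' hcard.symm
  obtain ⟨z, hzmem, hzmax⟩ := P.roots.toFinset.exists_max_image vf.v hne
  rw [Multiset.mem_toFinset] at hzmem
  have hzmax' : ∀ t ∈ P.roots, vf.v t ≤ vf.v z :=
    fun t ht => hzmax t (Multiset.mem_toFinset.2 ht)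
  refine ⟨z, hroot0 z hzmem, ?_, heval z hzmem⟩
  -- main claim : 0 ≤ v z
  by_contra hneg
  push_neg at hneg
  obtain ⟨M, hM⟩ := WithTop.ne_top_iff_exists.1 (vf.v_ne_top (hroot0 z hzmem))
  have hMneg : M < 0 := by
    rw [← hM] at hneg
    exact_mod_cast hneg
  set total : WithTop Γ := (P.roots.map vf.v).sum with htotal
  -- Fact 1 : v n = v (b D) + total
  have fact1 : vf.v n = vf.v (b D) + total := by
    have he : P.eval 0 = -n := by rw [← coeff_zero_eq_eval_zero, hc0]
    have he2 : P.eval 0 = b D * (P.roots.map fun t => -t).prod := by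
      conv_lhs => rw [hfact]
      rw [eval_mul, eval_C, eval_multiset_prod, Multiset.map_map]
      congr 2
      exact Multiset.map_congr rfl (fun t _ => by simp)
    have h3 : vf.v n = vf.v (b D * (P.roots.map fun t => -t).prod) := by
      rw [← he2, he, vf.v_neg]
    rw [h3, vf.v_mul, vf.v_multiset_prod, Multiset.map_map, htotal]
    congr 2
    exact Multiset.map_congr rfl (fun t _ => vf.v_neg t)
  -- Fact 2 : coefficient at p ^ i₀ via esymm
  set j : ℕ := p ^ D - p ^ i₀ with hj
  have hple : p ^ i₀ ≤ p ^ D := hpmono i₀ D hi₀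
  have hcardj : Multiset.card P.roots - p ^ i₀ = j := by rw [hcard]
  have hcoeffP : b i₀ = b D * ((-1) ^ j * P.roots.esymm j) := by
    rw [← hcoeff i₀ hi₀]
    conv_lhs => rw [hfact]
    rw [coeff_C_mul, Multiset.prod_X_sub_C_coeff _ (by rw [hcard]; exact hple), hcardj]
  -- Fact 3 : valuation bound on esymm
  have hesymm : total + ((p ^ i₀ • (-M) : Γ) : WithTop Γ) ≤ vf.v (P.roots.esymm j) := by
    apply vf.le_v_multiset_sum
    intro x hx
    obtain ⟨B, hB, rfl⟩ := Multiset.mem_map.1 hx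
    obtain ⟨hBle, hBcard⟩ := Multiset.mem_powersetCard.1 hB
    rw [vf.v_multiset_prod]
    have hsplit2 : total = ((P.roots - B).map vf.v).sum + (B.map vf.v).sum := by
      rw [htotal, ← Multiset.sum_add, ← Multiset.map_add]
      congr 2
      rw [tsub_add_cancel_of_le hBle]
    have hcardsub : (P.roots - B).card = p ^ i₀ := by
      rw [Multiset.card_sub hBle, hBcard, hcard, hj]
      omega
    have hbound : ((P.roots - B).map vf.v).sum ≤ ((p ^ i₀ • M : Γ) : WithTop Γ) := by
      calc ((P.roots - B).map vf.v).sum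
          ≤ Multiset.card ((P.roots - B).map vf.v) • ((M : Γ) : WithTop Γ) := by
            apply Multiset.sum_le_card_nsmul
            intro x hx2
            obtain ⟨t, ht, rfl⟩ := Multiset.mem_map.1 hx2
            rw [hM]
            exact hzmax' t (Multiset.mem_of_le (tsub_le_self) ht)
        _ = _ := by rw [Multiset.card_map, hcardsub, coe_nsmul_wt]
    calc total + ((p ^ i₀ • (-M) : Γ) : WithTop Γ)
        = (((P.roots - B).map vf.v).sum + (B.map vf.v).sum) + ((p ^ i₀ • (-M) : Γ) : WithTop Γ) := by
          rw [← hsplit2]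
      _ ≤ (((p ^ i₀ • M : Γ) : WithTop Γ) + (B.map vf.v).sum) + ((p ^ i₀ • (-M) : Γ) : WithTop Γ) := by
          exact add_le_add_left (add_le_add_left hbound _) _
      _ = (B.map vf.v).sum + (((p ^ i₀ • M : Γ) : WithTop Γ) + ((p ^ i₀ • (-M) : Γ) : WithTop Γ)) := by
          rw [add_comm ((p ^ i₀ • M : Γ) : WithTop Γ) ((B.map vf.v).sum), add_assoc]
      _ = (B.map vf.v).sum := by
          rw [← WithTop.coe_add, smul_neg, add_neg_cancel, WithTop.coe_zero, add_zero]
  -- assemble the contradiction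
  have hvm1 : vf.v ((-1 : K) ^ j) = 0 := by
    rw [vf.v_pow]
    have : vf.v (-1 : K) = 0 := by rw [show (-1 : K) = -(1 : K) from rfl, vf.v_neg, vf.v_one]
    rw [this, smul_zero]
  have hchain : vf.v n + ((p ^ i₀ • (-M) : Γ) : WithTop Γ) ≤ vf.v n := by
    calc vf.v n + ((p ^ i₀ • (-M) : Γ) : WithTop Γ)
        = vf.v (b D) + (total + ((p ^ i₀ • (-M) : Γ) : WithTop Γ)) := by
          rw [fact1, add_assoc]
      _ ≤ vf.v (b D) + vf.v (P.roots.esymm j) := add_le_add_right hesymm _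
      _ = vf.v (b i₀) := by
          rw [hcoeffP, vf.v_mul, vf.v_mul, hvm1, zero_add]
      _ = vf.v n := hi₀v
  obtain ⟨ν, hν⟩ := WithTop.ne_top_iff_exists.1 (vf.v_ne_top hn)
  rw [← hν, ← WithTop.coe_add, WithTop.coe_le_coe] at hchain
  have hpos : (0 : Γ) < p ^ i₀ • (-M) := nsmul_pos (neg_pos.2 hMneg) (hppow_pos i₀).ne'
  exact absurd hchain (not_le.2 (lt_add_of_pos_right ν hpos))


end ValuedFieldAux

/-- Let `(K, v)` be a separably closed valued field of characteristic
`p > 0`. Let `a_0, …, a_d ∈ K` with `a_0 ≠ 0`, and `n ∈ K`, `n ≠ 0`. Then there is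
`m ≠ 0` with `∑ a_i·m^{p^i} = n` and `v n = min_{i : a_i ≠ 0} (p^i·v m + v a_i)`.
(Terms with `a_i = 0` have `v (a i) = ⊤` and hence do not contribute to the `inf`.) -/
theorem stmt_6 (p : ℕ) (hp : p.Prime) (K : Type*) [Field K] [CharP K p] [IsSepClosed K]
    (Γ : Type*) [AddCommGroup Γ] [LinearOrder Γ] [IsOrderedAddMonoid Γ] (vf : ValuedFieldAux K Γ)
    (d : ℕ) (a : ℕ → K) (ha0 : a 0 ≠ 0) (n : K) (hn : n ≠ 0) :
    ∃ m : K, m ≠ 0 ∧ (∑ i ∈ Finset.range (d + 1), a i * m ^ (p ^ i)) = n ∧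
      vf.v n = (Finset.range (d + 1)).inf (fun i => p ^ i • vf.v m + vf.v (a i)) := by
  classical
  obtain ⟨ν, hν⟩ := WithTop.ne_top_iff_exists.1 (vf.v_ne_top hn)
  set S : Finset ℕ := (Finset.range (d+1)).filter (fun i => a i ≠ 0) with hS
  have h0S : 0 ∈ S := Finset.mem_filter.2 ⟨Finset.mem_range.2 (Nat.succ_pos d), ha0⟩
  set α : ℕ → Γ := fun i => WithTop.untopD 0 (vf.v (a i)) with hα
  have hαv : ∀ i, a i ≠ 0 → vf.v (a i) = ((α i : Γ) : WithTop Γ) := by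
    intro i hi
    obtain ⟨g, hg⟩ := WithTop.ne_top_iff_exists.1 (vf.v_ne_top hi)
    have h2 : α i = g := by
      show WithTop.untopD 0 (vf.v (a i)) = g
      rw [← hg, WithTop.untopD_coe]
    rw [h2, hg]
  have hγ : ∀ i : ℕ, ∃ g : Γ, p ^ i • g = ν - α i := fun i => vf.p_pow_div p hp i (ν - α i)
  choose γfun hγfun using hγ
  obtain ⟨i₀, hi₀S, hi₀max⟩ := S.exists_max_image γfun ⟨0, h0S⟩
  set γ : Γ := γfun i₀ with hγdef
  obtain ⟨c, hc⟩ := vf.v_surj γ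
  have hc0 : c ≠ 0 := by
    intro h; rw [h, vf.v_zero] at hc; exact WithTop.top_ne_coe hc
  set D : ℕ := S.max' ⟨0, h0S⟩ with hD
  have hDS : D ∈ S := S.max'_mem _
  have hDd : D ≤ d := Nat.lt_succ_iff.1 (Finset.mem_range.1 (Finset.mem_filter.1 hDS).1)
  have hDmax : ∀ i ∈ S, i ≤ D := fun i hi => S.le_max' i hi
  have haD : a D ≠ 0 := (Finset.mem_filter.1 hDS).2
  set b : ℕ → K := fun i => a i * c ^ (p ^ i) with hb
  have hvb : ∀ i ∈ S, vf.v (b i) = ((α i + p ^ i • γ : Γ) : WithTop Γ) := by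
    intro i hi
    rw [hb]
    simp only
    rw [vf.v_mul, vf.v_pow, hc, coe_nsmul_wt, hαv i (Finset.mem_filter.1 hi).2,
      ← WithTop.coe_add]
  have hkey : ∀ i ∈ S, ν ≤ α i + p ^ i • γ := by
    intro i hi
    have h1 : p ^ i • γfun i ≤ p ^ i • γ := nsmul_le_nsmul_right (hi₀max i hi) _
    rw [hγfun i] at h1
    have := add_le_add_right h1 (α i)
    rwa [add_sub_cancel] at this
  have hkey₀ : α i₀ + p ^ i₀ • γ = ν := by
    rw [hγdef, hγfun i₀, add_sub_cancel]
  -- apply the core lemma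
  have hb0 : b 0 ≠ 0 := mul_ne_zero ha0 (pow_ne_zero _ hc0)
  have hbD : b D ≠ 0 := mul_ne_zero haD (pow_ne_zero _ hc0)
  have hi₀D : i₀ ≤ D := hDmax i₀ hi₀S
  have hi₀v : vf.v (b i₀) = vf.v n := by
    rw [hvb i₀ hi₀S, hkey₀, hν]
  obtain ⟨z, hz0, hvz, hsum⟩ := vf.core p hp D b hb0 hbD n hn i₀ hi₀D hi₀v
  have hsum2 : (∑ i ∈ Finset.range (d + 1), a i * (c * z) ^ (p ^ i)) = n := by
    have h1 : ∀ i, a i * (c * z) ^ (p ^ i) = b i * z ^ (p ^ i) := by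
      intro i
      rw [hb]; simp only; rw [mul_pow]; ring
    calc ∑ i ∈ Finset.range (d + 1), a i * (c * z) ^ (p ^ i)
        = ∑ i ∈ Finset.range (d + 1), b i * z ^ (p ^ i) :=
          Finset.sum_congr rfl (fun i _ => h1 i)
      _ = ∑ i ∈ Finset.range (D + 1), b i * z ^ (p ^ i) := by
          refine (Finset.sum_subset ?_ ?_).symm
          · exact Finset.range_subset_range.2 (by omega)
          · intro i hi hni
            have hiD : ¬ i ≤ D := fun h =>
              hni (Finset.mem_range.2 (Nat.lt_succ_of_le h))
            have hai : a i = 0 := by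
              by_contra hane
              exact hiD (hDmax i (Finset.mem_filter.2 ⟨hi, hane⟩))
            rw [hb]; simp [hai]
      _ = n := hsum
  refine ⟨c * z, mul_ne_zero hc0 hz0, hsum2, ?_⟩
  · -- the valuation identity
    have hvm : vf.v (c * z) = ((γ : Γ) : WithTop Γ) + vf.v z := by
      rw [vf.v_mul, hc]
    have hγle : ((γ : Γ) : WithTop Γ) ≤ vf.v (c * z) := by
      rw [hvm]
      calc ((γ : Γ) : WithTop Γ) = ((γ : Γ) : WithTop Γ) + 0 := by rw [add_zero]
      _ ≤ ((γ : Γ) : WithTop Γ) + vf.v z := add_le_add_right hvz _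
    refine le_antisymm ?_ ?_
    · -- v n ≤ inf
      refine Finset.le_inf ?_
      intro i hi
      by_cases hai : a i = 0
      · rw [(vf.v_eq_top_iff (a i)).2 hai, add_top]
        exact le_top
      · have hiS : i ∈ S := Finset.mem_filter.2 ⟨hi, hai⟩
        have h2 : ((p ^ i • γ : Γ) : WithTop Γ) ≤ p ^ i • vf.v (c * z) := by
          rw [← coe_nsmul_wt]
          exact nsmul_le_nsmul_right hγle _
        calc vf.v n = ((ν : Γ) : WithTop Γ) := hν.symm
          _ ≤ ((α i + p ^ i • γ : Γ) : WithTop Γ) := WithTop.coe_le_coe.2 (hkey i hiS)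
          _ = ((p ^ i • γ : Γ) : WithTop Γ) + vf.v (a i) := by
              rw [hαv i hai, ← WithTop.coe_add, add_comm]
          _ ≤ p ^ i • vf.v (c * z) + vf.v (a i) := add_le_add_left h2 _
    · -- inf ≤ v n
      conv_rhs => rw [← hsum2]
      refine vf.le_v_finset_sum _ _ _ ?_
      intro i hi
      have hterm : vf.v (a i * (c * z) ^ (p ^ i)) = p ^ i • vf.v (c * z) + vf.v (a i) := by
        rw [vf.v_mul, vf.v_pow, add_comm]
      rw [hterm]
      exact Finset.inf_le hi
end

section
/- Let (K, v) be a separably closed valued field of characteristic p > 0, let d ≥ 1, and let a_0, …, a_d ∈ K with a_0 ≠ 0 and a_d ≠ 0. Then for every n ∈ K with n ≠ 0, the set S = {v(m) : m ∈ K, ∑_{i=0}^{d} a_i·m^{p^i} = n} is nonempty and has at most 2^d elements. -/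
open Polynomial Finset

section Helpers

variable {K : Type*} [Field K] {Γ : Type*} [AddCommGroup Γ] [LinearOrder Γ] [IsOrderedAddMonoid Γ]
  (vf : ValuedFieldAux K Γ)

lemma vfa_v_zero : vf.v 0 = ⊤ := (vf.v_eq_top_iff 0).2 rfl

lemma vfa_v_one : vf.v 1 = 0 := by
  have h := vf.v_mul 1 1
  rw [one_mul] at h
  cases hv : vf.v 1 with
  | top => exact absurd ((vf.v_eq_top_iff 1).1 hv) one_ne_zero
  | coe γ =>
      rw [hv, ← WithTop.coe_add] at h
      have : γ = γ + γ := WithTop.coe_injective h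
      have h0 : γ = 0 := add_eq_left.mp this.symm
      rw [h0]; rfl

lemma vfa_v_pow (x : K) (m : ℕ) : vf.v (x ^ m) = m • vf.v x := by
  induction m with
  | zero => simp [vfa_v_one]
  | succ k ih => rw [pow_succ, vf.v_mul, ih, succ_nsmul]

lemma vfa_root_of_unity {c : K} {m : ℕ} (hm : 0 < m) (h : c ^ m = 1) :
    vf.v c = 0 := by
  have hc : c ≠ 0 := by
    intro h0; rw [h0, zero_pow hm.ne'] at h; exact zero_ne_one h
  cases hv : vf.v c with
  | top => exact absurd ((vf.v_eq_top_iff c).1 hv) hc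
  | coe γ =>
      have h1 : vf.v (c ^ m) = 0 := by rw [h, vfa_v_one]
      rw [vfa_v_pow, hv, ← WithTop.coe_nsmul, ← WithTop.coe_zero] at h1
      have h2 : m • γ = 0 := WithTop.coe_injective h1
      have h3 : γ = 0 := by
        rcases lt_trichotomy γ 0 with h4 | h4 | h4
        · have h5 := nsmul_pos (neg_pos.2 h4) hm.ne'
          rw [neg_nsmul] at h5
          exact absurd h2 (neg_pos.mp h5).ne
        · exact h4
        · exact absurd h2 (nsmul_pos h4 hm.ne').ne'
      rw [h3]; rfl


lemma vfa_v_neg (x : K) : vf.v (-x) = vf.v x := by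
  have h1 : vf.v (-1 : K) = 0 := vfa_root_of_unity vf two_pos (by norm_num)
  calc vf.v (-x) = vf.v ((-1) * x) := by rw [neg_one_mul]
    _ = vf.v x := by rw [vf.v_mul, h1, zero_add]

lemma vfa_v_add_eq {x y : K} (h : vf.v x < vf.v y) : vf.v (x + y) = vf.v x := by
  refine le_antisymm ?_ ?_
  · by_contra hlt
    push_neg at hlt
    have h2 : vf.v x = vf.v ((x + y) + (-y)) :=
      (congrArg vf.v (add_neg_cancel_right x y)).symm
    have h3 := vf.v_add (x + y) (-y)
    rw [vfa_v_neg] at h3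
    have : vf.v x < min (vf.v (x + y)) (vf.v y) := lt_min hlt h
    exact absurd (h2 ▸ h3) this.not_ge
  · have := vf.v_add x y
    rwa [min_eq_left h.le] at this

lemma vfa_v_sum_gt {ι : Type*} (s : Finset ι) (f : ι → K) (b : WithTop Γ)
    (hb : b ≠ ⊤) (h : ∀ i ∈ s, b < vf.v (f i)) :
    b < vf.v (∑ i ∈ s, f i) := by
  induction s using Finset.cons_induction with
  | empty => simp [vfa_v_zero]; exact lt_top_iff_ne_top.2 hb
  | cons a s ha ih =>
      rw [Finset.sum_cons]
      refine lt_of_lt_of_le ?_ (vf.v_add _ _)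
      exact lt_min (h a (Finset.mem_cons_self a s))
        (ih fun i hi => h i (Finset.mem_cons_of_mem hi))

lemma vfa_v_sum_eq {ι : Type*} {s : Finset ι} {f : ι → K} {j : ι}
    (hj : j ∈ s) (htop : vf.v (f j) ≠ ⊤)
    (h : ∀ i ∈ s, i ≠ j → vf.v (f j) < vf.v (f i)) :
    vf.v (∑ i ∈ s, f i) = vf.v (f j) := by
  classical
  rw [← Finset.add_sum_erase s f hj]
  exact vfa_v_add_eq vf (vfa_v_sum_gt vf _ _ _ htop fun i hi =>
    h i (Finset.mem_of_mem_erase hi) (Finset.ne_of_mem_erase hi))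

end Helpers

/-- Let `(K, v)` be a separably closed valued field of characteristic
`p > 0`, `d ≥ 1`, and `a_0, …, a_d ∈ K` with `a_0 ≠ 0` and `a_d ≠ 0`. Then for every
`n ≠ 0` the set `S = {v m : ∑ a_i·m^{p^i} = n}` is nonempty and has at most `2^d`
elements. -/
theorem stmt_12 (p : ℕ) (hp : p.Prime) (K : Type*) [Field K] [CharP K p] [IsSepClosed K]
    (Γ : Type*) [AddCommGroup Γ] [LinearOrder Γ] [IsOrderedAddMonoid Γ] (vf : ValuedFieldAux K Γ)
    (d : ℕ) (hd : 1 ≤ d) (a : ℕ → K) (ha0 : a 0 ≠ 0) (had : a d ≠ 0)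
    (n : K) (hn : n ≠ 0) :
    (vf.v '' {m : K | ∑ i ∈ Finset.range (d + 1), a i * m ^ (p ^ i) = n}).Nonempty ∧
    (vf.v '' {m : K | ∑ i ∈ Finset.range (d + 1), a i * m ^ (p ^ i) = n}).Finite ∧
    (vf.v '' {m : K | ∑ i ∈ Finset.range (d + 1), a i * m ^ (p ^ i) = n}).ncard
      ≤ 2 ^ d := by
  classical
  have hp2 := hp.two_le
  set P : K[X] := (∑ i ∈ range (d + 1), C (a i) * X ^ (p ^ i)) - C n with hP
  have heval : ∀ x : K, P.eval x = (∑ i ∈ range (d + 1), a i * x ^ (p ^ i)) - n := by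
    intro x; simp [hP, eval_finset_sum]
  have hcoeff : P.coeff (p ^ d) = a d := by
    rw [hP, coeff_sub, finset_sum_coeff]
    rw [coeff_C, if_neg (pow_ne_zero d hp.pos.ne'), sub_zero]
    rw [Finset.sum_eq_single d]
    · rw [coeff_C_mul, coeff_X_pow, if_pos rfl, mul_one]
    · intro b _ hb
      rw [coeff_C_mul, coeff_X_pow,
        if_neg (fun h => hb (Nat.pow_right_injective hp2 h.symm)), mul_zero]
    · intro h; exact absurd (mem_range.2 (Nat.lt_succ_self d)) h
  have hPne : P ≠ 0 := fun h => had (by rw [h, coeff_zero] at hcoeff; exact hcoeff.symm)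
  have hdeg_ge : ((p ^ d : ℕ) : WithBot ℕ) ≤ P.degree :=
    le_degree_of_ne_zero (hcoeff ▸ had)
  have hdeg_ne : P.degree ≠ 0 := by
    intro h
    rw [h] at hdeg_ge
    have : (p ^ d : ℕ) ≤ 0 := by exact_mod_cast hdeg_ge
    exact absurd this (Nat.pos_of_ne_zero (pow_ne_zero d hp.pos.ne')).not_ge
  have hderiv : derivative P = C (a 0) := by
    rw [hP, derivative_sub, derivative_C, sub_zero, derivative_sum]
    rw [Finset.sum_eq_single 0]
    · simp
    · intro i hi hi0
      rw [derivative_C_mul_X_pow]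
      have : ((p ^ i : ℕ) : K) = 0 := by
        rw [Nat.cast_pow, CharP.cast_eq_zero K p, zero_pow hi0]
      rw [this, mul_zero, map_zero, zero_mul]
    · intro h; exact absurd (mem_range.2 (Nat.succ_pos d)) h
  have hsep : P.Separable := by
    rw [Polynomial.separable_def, hderiv]
    exact ⟨0, C (a 0)⁻¹, by rw [zero_mul, zero_add, ← C_mul, inv_mul_cancel₀ ha0, map_one]⟩
  have hdeg_le : P.natDegree ≤ p ^ d := by
    rw [natDegree_le_iff_degree_le, hP]
    refine le_trans (degree_sub_le _ _) (max_le ?_ ?_)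
    · refine le_trans (degree_sum_le _ _) (Finset.sup_le fun i hi => ?_)
      refine le_trans (degree_C_mul_X_pow_le _ _) ?_
      exact_mod_cast Nat.pow_le_pow_right hp.pos (Nat.lt_succ_iff.1 (mem_range.1 hi))
    · exact le_trans degree_C_le (by exact_mod_cast Nat.zero_le _)
  -- additive map
  haveI := Fact.mk hp
  set Psi : K →+ K := AddMonoidHom.mk' (fun x => ∑ i ∈ range (d + 1), a i * x ^ p ^ i)
    (by
      intro x y
      rw [← Finset.sum_add_distrib]
      exact Finset.sum_congr rfl fun i _ => by
        rw [add_pow_char_pow, mul_add]) with hPsi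
  set f : ZMod p →+* K := ZMod.castHom (dvd_refl p) K with hf
  have hfermat : ∀ (c : ZMod p) (i : ℕ), c ^ (p ^ i) = c := by
    intro c i
    induction i with
    | zero => rw [pow_zero, pow_one]
    | succ k ih => rw [pow_succ, pow_mul, ih, ZMod.pow_card]
  have hPsic : ∀ (c : ZMod p) (x : K), Psi (f c * x) = f c * Psi x := by
    intro c x
    show (∑ i ∈ range (d + 1), a i * (f c * x) ^ p ^ i) = f c * ∑ i ∈ range (d + 1), a i * x ^ p ^ i
    rw [Finset.mul_sum]
    refine Finset.sum_congr rfl fun i _ => ?_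
    rw [mul_pow, ← map_pow, hfermat]
    ring
  set S : Set K := {m : K | ∑ i ∈ range (d + 1), a i * m ^ (p ^ i) = n} with hS
  have hmem : ∀ x : K, x ∈ S ↔ Psi x = n := fun x => Iff.rfl
  have hroot : ∀ x : K, x ∈ S ↔ P.IsRoot x := by
    intro x
    rw [hmem, IsRoot.def, heval, sub_eq_zero]
    rfl
  have hSfin : S.Finite :=
    (Polynomial.finite_setOf_isRoot hPne).subset fun x hx => (hroot x).1 hx
  have hScard : S.ncard ≤ p ^ d := by
    refine le_trans ?_ (le_trans (Polynomial.card_roots' P) hdeg_le)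
    rw [Set.ncard_eq_toFinset_card _ hSfin]
    refine le_trans (Finset.card_le_card (t := P.roots.toFinset) ?_) (Multiset.toFinset_card_le _)
    intro x hx
    rw [Set.Finite.mem_toFinset] at hx
    rw [Multiset.mem_toFinset, Polynomial.mem_roots hPne]
    exact (hroot x).1 hx
  have hS0 : ∀ x ∈ S, x ≠ 0 := by
    intro x hx h0
    rw [hmem, h0, map_zero] at hx
    exact hn hx.symm
  -- the value set
  have hTfin : (vf.v '' S).Finite := hSfin.image _
  set t : Finset (WithTop Γ) := hTfin.toFinset with ht
  have hmemt : ∀ γ, γ ∈ t ↔ ∃ m ∈ S, vf.v m = γ := by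
    intro γ
    rw [ht, Set.Finite.mem_toFinset]
    exact Set.mem_image _ _ _
  have hγtop : ∀ γ ∈ t, γ ≠ ⊤ := by
    intro γ hγ htop
    obtain ⟨m, hm, hvm⟩ := (hmemt γ).1 hγ
    exact hS0 m hm ((vf.v_eq_top_iff m).1 (htop ▸ hvm))
  have htcard : t.card ≤ d + 1 := by
    by_contra hcon
    push_neg at hcon
    have hne : t.Nonempty := Finset.card_pos.1 (by omega)
    set γ0 : WithTop Γ := t.max' hne with hγ0
    obtain ⟨m0, hm0S, hm0v⟩ := (hmemt γ0).1 (t.max'_mem hne)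
    set u : Finset (WithTop Γ) := t.erase γ0 with hu
    have hucard : u.card = t.card - 1 := Finset.card_erase_of_mem (t.max'_mem hne)
    have hch : ∀ γ : WithTop Γ, ∃ m : K, γ ∈ u → (m ∈ S ∧ vf.v m = γ) := by
      intro γ
      by_cases hγ : γ ∈ u
      · obtain ⟨m, hm, hvm⟩ := (hmemt γ).1 (Finset.mem_of_mem_erase hγ)
        exact ⟨m, fun _ => ⟨hm, hvm⟩⟩
      · exact ⟨0, fun h => absurd h hγ⟩
    choose M hM using hch
    have hγlt : ∀ γ ∈ u, γ < γ0 := fun γ hγ =>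
      lt_of_le_of_ne (t.le_max' γ (Finset.mem_of_mem_erase hγ)) (Finset.ne_of_mem_erase hγ)
    have hx : ∀ γ ∈ u, vf.v (M γ - m0) = γ := by
      intro γ hγ
      have h1 : vf.v (M γ) = γ := (hM γ hγ).2
      have h2 : vf.v (-m0) = γ0 := by rw [vfa_v_neg, hm0v]
      rw [sub_eq_add_neg, vfa_v_add_eq vf (by rw [h1, h2]; exact hγlt γ hγ), h1]
    have hΨx : ∀ γ ∈ u, Psi (M γ - m0) = 0 := by
      intro γ hγ
      rw [map_sub, (hmem _).1 (hM γ hγ).1, (hmem _).1 hm0S, sub_self]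
    set g : (↥u → ZMod p) → K :=
      fun c => m0 + ∑ γ ∈ u.attach, f (c γ) * (M ↑γ - m0) with hg
    have hgS : ∀ c, g c ∈ S := by
      intro c
      rw [hmem, hg]
      simp only [map_add, map_sum]
      rw [(hmem _).1 hm0S]
      have : ∀ γ ∈ u.attach, Psi (f (c γ) * (M ↑γ - m0)) = 0 := by
        intro γ _
        rw [hPsic, hΨx ↑γ γ.2, mul_zero]
      rw [Finset.sum_congr rfl this, Finset.sum_const_zero, add_zero]
    have hginj : Function.Injective g := by
      intro c c' hcc
      by_contra hne'
      have hzero : ∑ γ ∈ u.attach, f (c γ - c' γ) * (M ↑γ - m0) = 0 := by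
        have h1 : ∑ γ ∈ u.attach, f (c γ) * (M ↑γ - m0)
            = ∑ γ ∈ u.attach, f (c' γ) * (M ↑γ - m0) := by
          have := hcc
          rw [hg] at this
          exact add_left_cancel this
        calc ∑ γ ∈ u.attach, f (c γ - c' γ) * (M ↑γ - m0)
            = ∑ γ ∈ u.attach, (f (c γ) * (M ↑γ - m0) - f (c' γ) * (M ↑γ - m0)) := by
              refine Finset.sum_congr rfl fun γ _ => ?_
              rw [map_sub, sub_mul]
          _ = 0 := by rw [Finset.sum_sub_distrib, h1, sub_self]
      set w : Finset ↥u := u.attach.filter (fun γ => c γ - c' γ ≠ 0) with hw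
      have hwne : w.Nonempty := by
        rw [Finset.filter_nonempty_iff]
        by_contra hall
        push_neg at hall
        exact hne' (funext fun γ => sub_eq_zero.1 (hall γ (Finset.mem_attach _ γ)))
      set j : ↥u := w.min' hwne with hj
      have hjw : j ∈ w := w.min'_mem hwne
      have hjne : (c j - c' j) ≠ 0 := (Finset.mem_filter.1 hjw).2
      have hvf0 : ∀ e : ZMod p, e ≠ 0 → vf.v (f e) = 0 := by
        intro e he
        refine vfa_root_of_unity vf (m := p - 1) (by omega) ?_
        rw [← map_pow, ZMod.pow_card_sub_one_eq_one he, map_one]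
      have hvterm : ∀ γ : ↥u, (c γ - c' γ) ≠ 0 →
          vf.v (f (c γ - c' γ) * (M ↑γ - m0)) = (↑γ : WithTop Γ) := by
        intro γ he
        rw [vf.v_mul, hvf0 _ he, hx ↑γ γ.2, zero_add]
      have hjtop : (↑j : WithTop Γ) ≠ ⊤ := hγtop ↑j (Finset.mem_of_mem_erase j.2)
      have hveq := vfa_v_sum_eq vf (s := u.attach)
        (f := fun γ => f (c γ - c' γ) * (M ↑γ - m0)) (j := j)
        (Finset.mem_attach _ j) (by rw [hvterm j hjne]; exact hjtop) ?_
      · rw [hzero, vfa_v_zero, hvterm j hjne] at hveq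
        exact hjtop hveq.symm
      · intro i _ hij
        show vf.v (f (c j - c' j) * (M ↑j - m0)) < vf.v (f (c i - c' i) * (M ↑i - m0))
        rw [hvterm j hjne]
        by_cases hei : (c i - c' i) = 0
        · rw [hei, map_zero, zero_mul, vfa_v_zero]
          exact lt_top_iff_ne_top.2 hjtop
        · rw [hvterm i hei]
          have hji : j < i := lt_of_le_of_ne (w.min'_le i (Finset.mem_filter.2
            ⟨Finset.mem_attach _ i, hei⟩)) (Ne.symm hij)
          exact_mod_cast hji
    -- cardinality contradiction
    haveI : Finite ↥S := hSfin.to_subtype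
    have hcard1 : Nat.card (↥u → ZMod p) ≤ Nat.card ↥S :=
      Nat.card_le_card_of_injective (fun c => (⟨g c, hgS c⟩ : ↥S))
        (fun c c' h => hginj (congrArg Subtype.val h))
    rw [Nat.card_eq_fintype_card, Fintype.card_fun, ZMod.card, Fintype.card_coe] at hcard1
    rw [Nat.card_coe_set_eq] at hcard1
    have : p ^ u.card ≤ p ^ d := le_trans hcard1 hScard
    have := (Nat.pow_le_pow_iff_right hp.one_lt).1 this
    omega
  refine ⟨?_, hTfin, ?_⟩
  · obtain ⟨x, hx⟩ := IsSepClosed.exists_root P hdeg_ne hsep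
    exact ⟨vf.v x, Set.mem_image_of_mem _ ((hroot x).2 hx)⟩
  · rw [Set.ncard_eq_toFinset_card _ hTfin, ← ht]
    have := Nat.lt_two_pow_self (n := d)
    omega
end
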